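/- Let (X,r) be a finite non-degenerate solution of the set-theoretic Yang–Baxter equation. The following are equivalent: (a) the retraction Ret(X,r) is the trivial (flip) solution; (b) the span of {L_{[x]}, R_{[x]}, p_{[x]} : [x] ∈ X/∼} is an abelian Lie subalgebra of 𝔤𝔩(V); (c) the Lie algebra 𝔤(X,r) generated by {L_{[x]}∘p_{[y]}, R_{[x]}∘p_{[y]}} is abelian. -/

import Mathlib

/-- `r × id` on `X × X × X`. -/
def r1 {X : Type*} (r : X × X → X × X) : X × X × X → X × X × X :=
  fun p => ((r (p.1, p.2.1)).1, (r (p.1, p.2.1)).2, p.2.2)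

/-- `id × r` on `X × X × X`. -/
def r2 {X : Type*} (r : X × X → X × X) : X × X × X → X × X × X :=
  fun p => (p.1, r (p.2.1, p.2.2))

/-- The set-theoretic Yang–Baxter (braid) equation. -/
def IsYBE {X : Type*} (r : X × X → X × X) : Prop :=
  r1 r ∘ r2 r ∘ r1 r = r2 r ∘ r1 r ∘ r2 r

/-- Left translation `L_x`. -/
def Lmap {X : Type*} (r : X × X → X × X) (x y : X) : X := (r (x, y)).1

/-- Right translation `R_y`. -/
def Rmap {X : Type*} (r : X × X → X × X) (y x : X) : X := (r (x, y)).2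

/-- The retract setoid: `x ∼ y` iff `L_x = L_y` and `R_x = R_y`. -/
def retSetoid {X : Type*} (r : X × X → X × X) : Setoid X :=
  ⟨fun a b => Lmap r a = Lmap r b ∧ Rmap r a = Rmap r b,
    ⟨fun _ => ⟨rfl, rfl⟩, fun h => ⟨h.1.symm, h.2.symm⟩,
      fun h h' => ⟨h.1.trans h'.1, h.2.trans h'.2⟩⟩⟩

/-- The linear extension of `L_x` to `V = ℂ^X`, sending `e_y ↦ e_{L_x y}`. -/
noncomputable def Lop {X : Type*} (r : X × X → X × X) (x : X) :
    (X →₀ ℂ) →ₗ[ℂ] (X →₀ ℂ) :=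
  Finsupp.lmapDomain ℂ ℂ (Lmap r x)

/-- The linear extension of `R_y` to `V = ℂ^X`, sending `e_x ↦ e_{R_y x}`. -/
noncomputable def Rop {X : Type*} (r : X × X → X × X) (y : X) :
    (X →₀ ℂ) →ₗ[ℂ] (X →₀ ℂ) :=
  Finsupp.lmapDomain ℂ ℂ (Rmap r y)

open Classical in
/-- The projection onto the span of the `∼`-class of `z`. -/
noncomputable def pcl {X : Type*} [Fintype X] (r : X × X → X × X) (z : X) :
    (X →₀ ℂ) →ₗ[ℂ] (X →₀ ℂ) :=
  ∑ w : X, if (retSetoid r).r w z then Finsupp.lsingle w ∘ₗ Finsupp.lapply w else 0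

/-- Generators of the Lie algebra `𝔤(X,r)`: the operators
`L_{[x]} ∘ p_{[y]}` and `R_{[x]} ∘ p_{[y]}`. -/
def lieGens {X : Type*} [Fintype X] (r : X × X → X × X) :
    Set (Module.End ℂ (X →₀ ℂ)) :=
  {T | ∃ x y : X, T = Lop r x ∘ₗ pcl r y ∨ T = Rop r x ∘ₗ pcl r y}

/-- The set `{L_{[x]}, R_{[x]}, p_{[x]}}`. -/
def opSet {X : Type*} [Fintype X] (r : X × X → X × X) :
    Set (Module.End ℂ (X →₀ ℂ)) :=
  {T | ∃ x : X, T = Lop r x ∨ T = Rop r x ∨ T = pcl r x}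

attribute [local instance 100] LieRing.ofAssociativeRing

section Aux

open Finsupp

variable {X : Type*} [Fintype X] {r : X × X → X × X}

/-- single application of `Lop`-style maps. -/
lemma lmap_single (F : X → X) (a : X) (c : ℂ) :
    Finsupp.lmapDomain ℂ ℂ F (Finsupp.single a c) = Finsupp.single (F a) c := by
  simp [Finsupp.lmapDomain_apply, Finsupp.mapDomain_single]

open Classical in
lemma pcl_apply_single (r : X × X → X × X) (z u : X) (c : ℂ) :
    pcl r z (Finsupp.single u c) =
      if (retSetoid r).r u z then Finsupp.single u c else 0 := by
  classical
  rw [pcl, LinearMap.sum_apply]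
  rw [Finset.sum_eq_single u ?h1 ?h2]
  · by_cases h : (retSetoid r).r u z
    · rw [if_pos h, if_pos h]; simp
    · rw [if_neg h, if_neg h]; rfl
  case h1 =>
    intro w _ hw
    by_cases h : (retSetoid r).r w z
    · rw [if_pos h]
      simp [Finsupp.single_eq_of_ne' (Ne.symm hw)]
    · rw [if_neg h]; rfl
  case h2 => simp

lemma pcl_single_of_rel {z u : X} (h : (retSetoid r).r u z) (c : ℂ) :
    pcl r z (Finsupp.single u c) = Finsupp.single u c := by
  classical rw [pcl_apply_single, if_pos h]

lemma pcl_single_of_not_rel {z u : X} (h : ¬ (retSetoid r).r u z) (c : ℂ) :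
    pcl r z (Finsupp.single u c) = 0 := by
  classical rw [pcl_apply_single, if_neg h]

lemma ybe_comp (h : IsYBE r) (x y z : X) :
    Lmap r (Lmap r x y) (Lmap r (Rmap r y x) z) = Lmap r x (Lmap r y z) ∧
    Rmap r (Lmap r (Rmap r y x) z) (Lmap r x y)
      = Lmap r (Rmap r (Lmap r y z) x) (Rmap r z y) ∧
    Rmap r z (Rmap r y x) = Rmap r (Rmap r z y) (Rmap r (Lmap r y z) x) := by
  have H := congrFun h (x, y, z)
  simp only [Function.comp_apply, r1, r2, Prod.ext_iff] at H
  exact ⟨H.1, H.2.1, H.2.2⟩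

lemma end_comm_ext {A B : Module.End ℂ (X →₀ ℂ)}
    (h : ∀ a : X, A (B (Finsupp.single a 1)) = B (A (Finsupp.single a 1))) : ⁅A, B⁆ = 0 := by
  rw [show ⁅A, B⁆ = A * B - B * A from rfl]
  have key : A * B = B * A := by
    apply Finsupp.lhom_ext
    intro a b
    have hb : (Finsupp.single a b) = b • Finsupp.single a (1 : ℂ) := by
      rw [Finsupp.smul_single, smul_eq_mul, mul_one]
    rw [hb]
    simp only [Module.End.mul_apply, map_smul, h a]
  rw [key]; exact sub_self (B * A)

/-- Abbreviation: the conclusion of the retract triviality. -/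
def Ptriv (r : X × X → X × X) : Prop :=
  ∀ x y : X, (retSetoid r).r (Lmap r x y) y ∧ (retSetoid r).r (Rmap r y x) x

lemma commLL (h : IsYBE r) (hP : Ptriv r) (x y z : X) :
    Lmap r x (Lmap r y z) = Lmap r y (Lmap r x z) := by
  have e1 := (ybe_comp h x y z).1
  rw [(hP x y).1.1, (hP x y).2.1] at e1
  exact e1.symm

lemma commRR (h : IsYBE r) (hP : Ptriv r) (x y z : X) :
    Rmap r z (Rmap r y x) = Rmap r y (Rmap r z x) := by
  have e3 := (ybe_comp h x y z).2.2
  rw [(hP y z).2.2, (hP y z).1.2] at e3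
  exact e3

lemma commLR (h : IsYBE r) (hP : Ptriv r) (x z w : X) :
    Rmap r z (Lmap r x w) = Lmap r x (Rmap r z w) := by
  have e2 := (ybe_comp h x w z).2.1
  rw [(hP x w).2.1] at e2
  rw [(hP x z).1.2] at e2
  rw [(hP w z).1.2] at e2
  rw [(hP x z).2.1] at e2
  exact e2

lemma map_comm_lie {F G : X → X} (hFG : ∀ a, F (G a) = G (F a)) :
    ⁅(Finsupp.lmapDomain ℂ ℂ F : Module.End ℂ (X →₀ ℂ)), Finsupp.lmapDomain ℂ ℂ G⁆ = 0 := by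
  apply end_comm_ext
  intro a
  rw [lmap_single, lmap_single, lmap_single, lmap_single, hFG]

lemma map_pcl_lie {F : X → X} (hF : ∀ a, (retSetoid r).r (F a) a) (y : X) :
    ⁅(Finsupp.lmapDomain ℂ ℂ F : Module.End ℂ (X →₀ ℂ)), pcl r y⁆ = 0 := by
  apply end_comm_ext
  intro a
  by_cases hh : (retSetoid r).r a y
  · simp only [pcl_single_of_rel hh, lmap_single,
      pcl_single_of_rel ((retSetoid r).trans (hF a) hh)]
  · simp only [pcl_single_of_not_rel hh, lmap_single, map_zero,
      pcl_single_of_not_rel (fun hc => hh ((retSetoid r).trans ((retSetoid r).symm (hF a)) hc))]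

lemma pcl_pcl_lie (z w : X) : ⁅(pcl r z : Module.End ℂ (X →₀ ℂ)), pcl r w⁆ = 0 := by
  apply end_comm_ext
  intro a
  by_cases h1 : (retSetoid r).r a z <;> by_cases h2 : (retSetoid r).r a w
  · simp only [pcl_single_of_rel h1, pcl_single_of_rel h2]
  · simp only [pcl_single_of_rel h1, pcl_single_of_not_rel h2, map_zero]
  · simp only [pcl_single_of_not_rel h1, pcl_single_of_rel h2, map_zero]
  · simp only [pcl_single_of_not_rel h1, pcl_single_of_not_rel h2, map_zero]

lemma gen_comm_lie {F G : X → X} (hF : ∀ a, (retSetoid r).r (F a) a)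
    (hG : ∀ a, (retSetoid r).r (G a) a) (hFG : ∀ a, F (G a) = G (F a)) (y y' : X) :
    ⁅(Finsupp.lmapDomain ℂ ℂ F ∘ₗ pcl r y : Module.End ℂ (X →₀ ℂ)),
      Finsupp.lmapDomain ℂ ℂ G ∘ₗ pcl r y'⁆ = 0 := by
  apply end_comm_ext
  intro a
  simp only [LinearMap.comp_apply]
  by_cases h2 : (retSetoid r).r a y' <;> by_cases h1 : (retSetoid r).r a y
  · simp only [pcl_single_of_rel h2, pcl_single_of_rel h1, lmap_single,
      pcl_single_of_rel ((retSetoid r).trans (hG a) h1),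
      pcl_single_of_rel ((retSetoid r).trans (hF a) h2), hFG a]
  · simp only [pcl_single_of_rel h2, pcl_single_of_not_rel h1, lmap_single,
      pcl_single_of_not_rel
        (fun hc => h1 ((retSetoid r).trans ((retSetoid r).symm (hG a)) hc)),
      map_zero]
  · simp only [pcl_single_of_not_rel h2, pcl_single_of_rel h1, lmap_single,
      pcl_single_of_not_rel
        (fun hc => h2 ((retSetoid r).trans ((retSetoid r).symm (hF a)) hc)),
      map_zero]
  · simp only [pcl_single_of_not_rel h2, pcl_single_of_not_rel h1, map_zero]

lemma end_lie_def (A B : Module.End ℂ (X →₀ ℂ)) : ⁅A, B⁆ = A * B - B * A := rfl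

lemma span_lie_zero {s : Set (Module.End ℂ (X →₀ ℂ))}
    (hs : ∀ a ∈ s, ∀ b ∈ s, ⁅a, b⁆ = 0) :
    ∀ A ∈ Submodule.span ℂ s, ∀ B ∈ Submodule.span ℂ s, ⁅A, B⁆ = 0 := by
  have comm : ∀ a b : Module.End ℂ (X →₀ ℂ), ⁅a, b⁆ = 0 → a * b = b * a := by
    intro a b hab
    rw [end_lie_def] at hab
    exact eq_of_sub_eq_zero hab
  have h1 : ∀ B ∈ Submodule.span ℂ s, ∀ a ∈ s, ⁅a, B⁆ = 0 := by
    intro B hB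
    induction hB using Submodule.span_induction with
    | mem x hx => exact fun a ha => hs a ha x hx
    | zero =>
      intro a _
      rw [end_lie_def, mul_zero, zero_mul]
      abel
    | add x y _ _ hx hy =>
      intro a ha
      rw [end_lie_def, mul_add, add_mul, comm a x (hx a ha), comm a y (hy a ha)]
      abel
    | smul c x _ hx =>
      intro a ha
      rw [end_lie_def, mul_smul_comm, smul_mul_assoc, comm a x (hx a ha)]
      abel
  intro A hA
  induction hA using Submodule.span_induction with
  | mem x hx => exact fun B hB => h1 B hB x hx
  | zero =>
    intro B _
    rw [end_lie_def, mul_zero, zero_mul]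
    abel
  | add x y _ _ hx hy =>
    intro B hB
    rw [end_lie_def, add_mul, mul_add, comm x B (hx B hB), comm y B (hy B hB)]
    abel
  | smul c x _ hx =>
    intro B hB
    rw [end_lie_def, smul_mul_assoc, mul_smul_comm, comm x B (hx B hB)]
    abel

/-- The centralizer of a set of endomorphisms, as a Lie subalgebra. -/
noncomputable def lieCent (s : Set (Module.End ℂ (X →₀ ℂ))) :
    LieSubalgebra ℂ (Module.End ℂ (X →₀ ℂ)) :=
  { toSubmodule :=
    { carrier := {x | ∀ g ∈ s, g * x = x * g}
      add_mem' := fun {x y} hx hy g hg => by rw [mul_add, add_mul, hx g hg, hy g hg]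
      zero_mem' := fun g hg => by rw [mul_zero, zero_mul]
      smul_mem' := fun c x hx g hg => by rw [mul_smul_comm, smul_mul_assoc, hx g hg] }
    lie_mem' := fun {x y} hx hy g hg => by
      have h1 : g * (x * y) = (x * y) * g := by
        rw [← mul_assoc, hx g hg, mul_assoc, hy g hg, ← mul_assoc]
      have h2 : g * (y * x) = (y * x) * g := by
        rw [← mul_assoc, hy g hg, mul_assoc, hx g hg, ← mul_assoc]
      show g * ⁅x, y⁆ = ⁅x, y⁆ * g
      rw [end_lie_def]
      rw [show g * (x * y - y * x) = g * (x * y) - g * (y * x) from mul_sub g (x*y) (y*x),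
        show (x * y - y * x) * g = (x * y) * g - (y * x) * g from sub_mul (x*y) (y*x) g, h1, h2] }

lemma mem_lieCent {s : Set (Module.End ℂ (X →₀ ℂ))} {x : Module.End ℂ (X →₀ ℂ)} :
    x ∈ lieCent s ↔ ∀ g ∈ s, g * x = x * g := Iff.rfl

lemma lieSpan_comm {s : Set (Module.End ℂ (X →₀ ℂ))}
    (hs : ∀ a ∈ s, ∀ b ∈ s, ⁅a, b⁆ = 0) :
    ∀ A ∈ LieSubalgebra.lieSpan ℂ (Module.End ℂ (X →₀ ℂ)) s,
      ∀ B ∈ LieSubalgebra.lieSpan ℂ (Module.End ℂ (X →₀ ℂ)) s, ⁅A, B⁆ = 0 := by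
  have hc : ∀ a ∈ s, ∀ b ∈ s, a * b = b * a := by
    intro a ha b hb
    have h0 := hs a ha b hb
    rw [end_lie_def] at h0
    exact eq_of_sub_eq_zero h0
  have step1 : LieSubalgebra.lieSpan ℂ (Module.End ℂ (X →₀ ℂ)) s ≤ lieCent s := by
    rw [LieSubalgebra.lieSpan_le]
    intro a ha
    exact mem_lieCent.2 fun g hg => hc g hg a ha
  have step2 : LieSubalgebra.lieSpan ℂ (Module.End ℂ (X →₀ ℂ)) s ≤
      lieCent ((LieSubalgebra.lieSpan ℂ (Module.End ℂ (X →₀ ℂ)) s : Set _)) := by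
    rw [LieSubalgebra.lieSpan_le]
    intro a ha
    exact mem_lieCent.2 fun g hg => (mem_lieCent.1 (step1 hg) a ha).symm
  intro A hA B hB
  have hAB := mem_lieCent.1 (step2 hB) A hA
  rw [end_lie_def, hAB]
  exact sub_self (B * A)

lemma end_comm_of_lie_zero {A B : Module.End ℂ (X →₀ ℂ)} (h : ⁅A, B⁆ = 0) :
    A * B = B * A := by
  rw [end_lie_def] at h
  exact eq_of_sub_eq_zero h

lemma end_lie_symm {A B : Module.End ℂ (X →₀ ℂ)} (h : ⁅A, B⁆ = 0) : ⁅B, A⁆ = 0 := by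
  have h2 : A * B = B * A := end_comm_of_lie_zero h
  rw [end_lie_def, h2]
  abel

end Aux

theorem stmt15 {X : Type*} [Fintype X] (r : X × X → X × X) (h : IsYBE r)
    (hL : ∀ x : X, Function.Bijective (Lmap r x))
    (hR : ∀ y : X, Function.Bijective (Rmap r y)) :
    ((∀ x y : X, (retSetoid r).r (Lmap r x y) y ∧ (retSetoid r).r (Rmap r y x) x) ↔
      (∀ A ∈ Submodule.span ℂ (opSet r), ∀ B ∈ Submodule.span ℂ (opSet r),
        ⁅A, B⁆ = 0)) ∧
    ((∀ A ∈ Submodule.span ℂ (opSet r), ∀ B ∈ Submodule.span ℂ (opSet r),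
        ⁅A, B⁆ = 0) ↔
      IsLieAbelian (LieSubalgebra.lieSpan ℂ (Module.End ℂ (X →₀ ℂ)) (lieGens r))) := by
  classical
  have hPQ : Ptriv r →
      (∀ A ∈ Submodule.span ℂ (opSet r), ∀ B ∈ Submodule.span ℂ (opSet r), ⁅A, B⁆ = 0) := by
    intro hP
    apply span_lie_zero
    rintro a ⟨x, hx⟩ b ⟨y, hy⟩
    have lieLL : ∀ u v : X, ⁅Lop r u, Lop r v⁆ = 0 :=
      fun u v => map_comm_lie (fun a => commLL h hP u v a)
    have lieRR : ∀ u v : X, ⁅Rop r u, Rop r v⁆ = 0 :=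
      fun u v => map_comm_lie (fun a => commRR h hP a v u)
    have lieLR : ∀ u v : X, ⁅Lop r u, Rop r v⁆ = 0 :=
      fun u v => map_comm_lie (fun a => (commLR h hP u v a).symm)
    have lieLp : ∀ u v : X, ⁅Lop r u, pcl r v⁆ = 0 :=
      fun u v => map_pcl_lie (fun a => (hP u a).1) v
    have lieRp : ∀ u v : X, ⁅Rop r u, pcl r v⁆ = 0 :=
      fun u v => map_pcl_lie (fun a => (hP a u).2) v
    rcases hx with hx | hx | hx <;> rcases hy with hy | hy | hy <;> subst hx <;> subst hy
    · exact lieLL x y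
    · exact lieLR x y
    · exact lieLp x y
    · exact end_lie_symm (lieLR y x)
    · exact lieRR x y
    · exact lieRp x y
    · exact end_lie_symm (lieLp y x)
    · exact end_lie_symm (lieRp y x)
    · exact pcl_pcl_lie x y
  have hQP : (∀ A ∈ Submodule.span ℂ (opSet r), ∀ B ∈ Submodule.span ℂ (opSet r), ⁅A, B⁆ = 0) →
      Ptriv r := by
    intro hQ x y
    constructor
    · by_contra hc
      have hb := hQ (Lop r x) (Submodule.subset_span ⟨x, Or.inl rfl⟩)
        (pcl r y) (Submodule.subset_span ⟨y, Or.inr (Or.inr rfl)⟩)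
      have hcm := end_comm_of_lie_zero hb
      have hev := LinearMap.congr_fun hcm (Finsupp.single y (1 : ℂ))
      simp only [Module.End.mul_apply] at hev
      rw [pcl_single_of_rel ((retSetoid r).refl y)] at hev
      rw [show Lop r x = Finsupp.lmapDomain ℂ ℂ (Lmap r x) from rfl, lmap_single] at hev
      rw [pcl_single_of_not_rel hc] at hev
      exact one_ne_zero (Finsupp.single_eq_zero.1 hev)
    · by_contra hc
      have hb := hQ (Rop r y) (Submodule.subset_span ⟨y, Or.inr (Or.inl rfl)⟩)
        (pcl r x) (Submodule.subset_span ⟨x, Or.inr (Or.inr rfl)⟩)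
      have hcm := end_comm_of_lie_zero hb
      have hev := LinearMap.congr_fun hcm (Finsupp.single x (1 : ℂ))
      simp only [Module.End.mul_apply] at hev
      rw [pcl_single_of_rel ((retSetoid r).refl x)] at hev
      rw [show Rop r y = Finsupp.lmapDomain ℂ ℂ (Rmap r y) from rfl, lmap_single] at hev
      rw [pcl_single_of_not_rel hc] at hev
      exact one_ne_zero (Finsupp.single_eq_zero.1 hev)
  have hPR : Ptriv r →
      IsLieAbelian (LieSubalgebra.lieSpan ℂ (Module.End ℂ (X →₀ ℂ)) (lieGens r)) := by
    intro hP
    have hgens : ∀ a ∈ lieGens r, ∀ b ∈ lieGens r, ⁅a, b⁆ = 0 := by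
      rintro a ⟨x, y, hxy⟩ b ⟨x', y', hxy'⟩
      have hFL : ∀ u : X, ∀ a : X, (retSetoid r).r (Lmap r u a) a := fun u a => (hP u a).1
      have hFR : ∀ u : X, ∀ a : X, (retSetoid r).r (Rmap r u a) a := fun u a => (hP a u).2
      rcases hxy with hx | hx <;> rcases hxy' with hy | hy <;> subst hx <;> subst hy
      · exact gen_comm_lie (hFL x) (hFL x') (fun a => commLL h hP x x' a) y y'
      · exact gen_comm_lie (hFL x) (hFR x') (fun a => (commLR h hP x x' a).symm) y y'
      · exact gen_comm_lie (hFR x) (hFL x') (fun a => commLR h hP x' x a) y y'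
      · exact gen_comm_lie (hFR x) (hFR x') (fun a => commRR h hP a x' x) y y'
    refine ⟨fun A B => ?_⟩
    apply Subtype.ext
    rw [LieSubalgebra.coe_bracket, ZeroMemClass.coe_zero]
    exact lieSpan_comm hgens A.1 A.2 B.1 B.2
  have hRP : IsLieAbelian (LieSubalgebra.lieSpan ℂ (Module.End ℂ (X →₀ ℂ)) (lieGens r)) →
      Ptriv r := by
    intro hab
    have key : ∀ a ∈ lieGens r, ∀ b ∈ lieGens r, ⁅a, b⁆ = 0 := by
      intro a ha b hb
      have h0 := trivial_lie_zero _ _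
        (⟨a, LieSubalgebra.subset_lieSpan ha⟩ :
          LieSubalgebra.lieSpan ℂ (Module.End ℂ (X →₀ ℂ)) (lieGens r))
        (⟨b, LieSubalgebra.subset_lieSpan hb⟩ :
          LieSubalgebra.lieSpan ℂ (Module.End ℂ (X →₀ ℂ)) (lieGens r))
      have h1 := congrArg Subtype.val h0
      rwa [LieSubalgebra.coe_bracket, ZeroMemClass.coe_zero] at h1
    intro x y
    constructor
    · by_contra hc
      have hb := key (Lop r x ∘ₗ pcl r (Lmap r x y)) ⟨x, Lmap r x y, Or.inl rfl⟩
        (Lop r x ∘ₗ pcl r y) ⟨x, y, Or.inl rfl⟩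
      have hcm := end_comm_of_lie_zero hb
      have hev := LinearMap.congr_fun hcm (Finsupp.single y (1 : ℂ))
      simp only [Module.End.mul_apply, LinearMap.comp_apply] at hev
      rw [pcl_single_of_rel ((retSetoid r).refl y),
        pcl_single_of_not_rel (fun hcc => hc ((retSetoid r).symm hcc))] at hev
      rw [show Lop r x = Finsupp.lmapDomain ℂ ℂ (Lmap r x) from rfl, lmap_single] at hev
      rw [pcl_single_of_rel ((retSetoid r).refl (Lmap r x y)), lmap_single] at hev
      simp only [map_zero] at hev
      exact one_ne_zero (Finsupp.single_eq_zero.1 hev)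
    · by_contra hc
      have hb := key (Rop r y ∘ₗ pcl r (Rmap r y x)) ⟨y, Rmap r y x, Or.inr rfl⟩
        (Rop r y ∘ₗ pcl r x) ⟨y, x, Or.inr rfl⟩
      have hcm := end_comm_of_lie_zero hb
      have hev := LinearMap.congr_fun hcm (Finsupp.single x (1 : ℂ))
      simp only [Module.End.mul_apply, LinearMap.comp_apply] at hev
      rw [pcl_single_of_rel ((retSetoid r).refl x),
        pcl_single_of_not_rel (fun hcc => hc ((retSetoid r).symm hcc))] at hev
      rw [show Rop r y = Finsupp.lmapDomain ℂ ℂ (Rmap r y) from rfl, lmap_single] at hev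
      rw [pcl_single_of_rel ((retSetoid r).refl (Rmap r y x)), lmap_single] at hev
      simp only [map_zero] at hev
      exact one_ne_zero (Finsupp.single_eq_zero.1 hev)
  exact ⟨⟨fun hP => hPQ hP, fun hQ => hQP hQ⟩,
    ⟨fun hQ => hPR (hQP hQ), fun hab => hPQ (hRP hab)⟩⟩
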